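/- Let H ∈ (1/2, 1) and let R^X(t,s) = H/(2√(2π)) · ∫₀^{s∧t} ((s∧t) - a)^{2H-1} · (((s∨t)+a)^{-1/2} + ((s∨t)-a)^{-1/2}) da. Then for every c > 0 and all s, t > 0, R^X(ct, cs) = c^{2H - 1/2} · R^X(t, s). -/

import Mathlib

open MeasureTheory Real

noncomputable def RX (H t s : ℝ) : ℝ :=
  H / (2 * Real.sqrt (2 * Real.pi)) * ∫ a in (0:ℝ)..(min s t),
    (min s t - a) ^ (2*H - 1) * ((max s t + a) ^ (-(1:ℝ)/2) + (max s t - a) ^ (-(1:ℝ)/2))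

theorem stmt4 (H : ℝ) (hH1 : 1/2 < H) (hH2 : H < 1) (c s t : ℝ) (hc : 0 < c)
    (hs : 0 < s) (ht : 0 < t) :
    RX H (c * t) (c * s) = c ^ (2*H - 1/2) * RX H t s := by
  have hc0 : (0:ℝ) ≤ c := hc.le
  set m := min s t with hm
  set M := max s t with hM
  have hmM : m ≤ M := min_le_max
  have hm0 : 0 < m := lt_min hs ht
  have hmin : min (c * s) (c * t) = c * m := by
    rcases le_total s t with h | h <;>
      simp [hm, min_eq_left, min_eq_right, h, mul_le_mul_iff_right₀ hc]
  have hmax : max (c * s) (c * t) = c * M := by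
    rcases le_total s t with h | h <;>
      simp [hM, max_eq_left, max_eq_right, h, mul_le_mul_iff_right₀ hc]
  unfold RX
  rw [hmin, hmax]
  have hsub : (∫ a in (0:ℝ)..(c*m),
      (c*m - a) ^ (2*H - 1) * ((c*M + a) ^ (-(1:ℝ)/2) + (c*M - a) ^ (-(1:ℝ)/2)))
      = c • ∫ b in (0:ℝ)..m,
      (c*m - c*b) ^ (2*H - 1) * ((c*M + c*b) ^ (-(1:ℝ)/2) + (c*M - c*b) ^ (-(1:ℝ)/2)) := by
    have h0 : (0:ℝ) = c * 0 := by ring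
    rw [h0, ← intervalIntegral.smul_integral_comp_mul_left
      (fun a => (c*m - a) ^ (2*H - 1) * ((c*M + a) ^ (-(1:ℝ)/2) + (c*M - a) ^ (-(1:ℝ)/2))) c]
    norm_num
  rw [hsub]
  have hcongr : (∫ b in (0:ℝ)..m,
      (c*m - c*b) ^ (2*H - 1) * ((c*M + c*b) ^ (-(1:ℝ)/2) + (c*M - c*b) ^ (-(1:ℝ)/2)))
      = (c ^ (2*H - 1) * c ^ (-(1:ℝ)/2)) * ∫ b in (0:ℝ)..m,
      (m - b) ^ (2*H - 1) * ((M + b) ^ (-(1:ℝ)/2) + (M - b) ^ (-(1:ℝ)/2)) := by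
    rw [← intervalIntegral.integral_const_mul]
    apply intervalIntegral.integral_congr
    intro b hb
    have hb' : b ∈ Set.Icc (0:ℝ) m := by
      rwa [Set.uIcc_of_le hm0.le] at hb
    have hb0 : 0 ≤ b := hb'.1
    have hbm : b ≤ m := hb'.2
    dsimp only
    have h1 : c*m - c*b = c * (m - b) := by ring
    have h2 : c*M + c*b = c * (M + b) := by ring
    have h3 : c*M - c*b = c * (M - b) := by ring
    rw [h1, h2, h3,
      Real.mul_rpow hc0 (by linarith), Real.mul_rpow hc0 (by linarith),
      Real.mul_rpow hc0 (by linarith)]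
    ring
  rw [hcongr]
  have hpow : c * (c ^ (2*H - 1) * c ^ (-(1:ℝ)/2)) = c ^ (2*H - 1/2) := by
    nth_rewrite 1 [← Real.rpow_one c]
    rw [← Real.rpow_add hc, ← Real.rpow_add hc]
    congr 1
    ring
  rw [smul_eq_mul]
  rw [← hpow]
  ring
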